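/- Let a ∈ ℝ and 0 ≤ R ≤ 1 with α := a + R > 0, and let K_{a,R} = h + conj(g) be the generalized harmonic Koebe function. Then for every r ∈ [0, 1), |h'(r)| + |g'(r)| = (1+r)^{α−1}/(1−r)^{α+1}; that is, K_{a,R} attains equality in the distortion upper bound for affine and linear invariant families of order α along the positive real axis. -/

import Mathlib

open Complex Set

noncomputable section

/-- The open unit disk in the complex plane. -/
def unitDisk : Set ℂ := {z : ℂ | ‖z‖ < 1}

/-- The generalized Koebe function `k_a`, using the principal branch of the logarithm
(via the complex power function). -/
def koebeFn (a : ℂ) (z : ℂ) : ℂ :=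
  if a = 0 then (1 / 2) * Complex.log ((1 + z) / (1 - z))
  else (1 / (2 * a)) * (((1 + z) / (1 - z)) ^ a - 1)

/-- The lens map `l_R` (with principal-branch powers); note that this formula also
gives `l_0 ≡ 0` and `l_1 = id` on the unit disk. -/
def lensMap (R : ℝ) (z : ℂ) : ℂ :=
  (((1 + z) / (1 - z)) ^ (R : ℂ) - 1) / (((1 + z) / (1 - z)) ^ (R : ℂ) + 1)

/-- The `n`-th Taylor coefficient of `f` at `0`. -/
def coeffAt (f : ℂ → ℂ) (n : ℕ) : ℂ := iteratedDeriv n f 0 / n.factorial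

lemma isOpen_unitDisk : IsOpen unitDisk :=
  isOpen_lt continuous_norm continuous_const

/-- For real `a` and `0 ≤ R ≤ 1` with `α := a + R > 0`, the generalized harmonic Koebe
function `K_{a,R} = h + conj g` (defined by `h - g = k_a`, `g' = l_R·h'`,
`h(0) = g(0) = 0`) attains equality in the distortion upper bound along the positive
real axis: `|h'(r)| + |g'(r)| = (1+r)^(α-1)/(1-r)^(α+1)` for `0 ≤ r < 1`. -/
theorem generalized_harmonic_koebe_distortion_upper_equality
    (a R : ℝ) (hR0 : 0 ≤ R) (hR1 : R ≤ 1) (hα : 0 < a + R)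
    (h g : ℂ → ℂ)
    (hh : DifferentiableOn ℂ h unitDisk) (hg : DifferentiableOn ℂ g unitDisk)
    (h0 : h 0 = 0) (g0 : g 0 = 0)
    (hshear : ∀ z ∈ unitDisk, h z - g z = koebeFn (a : ℂ) z)
    (hdil : ∀ z ∈ unitDisk, deriv g z = lensMap R z * deriv h z) :
    ∀ r : ℝ, 0 ≤ r → r < 1 →
      ‖deriv h (r : ℂ)‖ + ‖deriv g (r : ℂ)‖
        = (1 + r) ^ (a + R - 1) / (1 - r) ^ (a + R + 1) := by
  intro r hr0 hr1
  set z : ℂ := (r : ℂ) with hzdef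
  have h1r : (0:ℝ) < 1 - r := by linarith
  have h1r' : (0:ℝ) < 1 + r := by linarith
  have hzd : z ∈ unitDisk := by
    simpa [unitDisk, hzdef, Complex.norm_real, Real.norm_eq_abs, _root_.abs_of_nonneg hr0] using hr1
  have hzmem : unitDisk ∈ nhds z := isOpen_unitDisk.mem_nhds hzd
  have hne : (1 : ℂ) - z ≠ 0 := by
    rw [hzdef, show (1:ℂ) - (r:ℂ) = ((1 - r : ℝ) : ℂ) from by push_cast; ring]
    exact_mod_cast h1r.ne'
  set s : ℝ := (1 + r) / (1 - r) with hsdef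
  have hs1 : 1 ≤ s := (one_le_div h1r).2 (by linarith)
  have hs0 : 0 < s := lt_of_lt_of_le one_pos hs1
  have hW : (1 + z) / (1 - z) = (s : ℂ) := by
    rw [hsdef, hzdef]; push_cast; ring
  have hWslit : (1 + z) / (1 - z) ∈ Complex.slitPlane := by
    rw [hW, Complex.mem_slitPlane_iff]
    left; simpa using hs0
  have hWne : (1 + z) / (1 - z) ≠ 0 := by
    rw [hW]; exact_mod_cast ne_of_gt hs0
  -- derivative of the Möbius map
  have hWd : HasDerivAt (fun w : ℂ => (1 + w) / (1 - w)) (2 / (1 - z) ^ 2) z := by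
    have h1 : HasDerivAt (fun w : ℂ => 1 + w) 1 z := (hasDerivAt_id z).const_add 1
    have h2 : HasDerivAt (fun w : ℂ => 1 - w) (-1) z := (hasDerivAt_id z).const_sub 1
    have := h1.div h2 hne
    refine this.congr_deriv (Eq.symm ?_)
    field_simp
    ring
  set c : ℝ := s ^ (a - 1) / (1 - r) ^ 2 with hcdef
  have hc0 : 0 < c := by positivity
  set k' : ℂ := (c : ℂ) with hkdef
  have hcast : ((s : ℂ)) ^ ((a : ℂ) - 1) = ((s ^ (a - 1) : ℝ) : ℂ) := by
    rw [Complex.ofReal_cpow hs0.le]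
    push_cast
    ring_nf
  have hsq : ((1 : ℂ) - z) ^ 2 = (((1 - r) ^ 2 : ℝ) : ℂ) := by
    rw [hzdef]; push_cast; ring
  -- derivative of koebeFn at z
  have hkd : HasDerivAt (koebeFn (a : ℂ)) k' z := by
    by_cases ha : (a : ℂ) = 0
    · have ha' : a = 0 := by exact_mod_cast ha
      have hfn : koebeFn (a : ℂ) = fun w => (1 / 2) * Complex.log ((1 + w) / (1 - w)) := by
        funext w; simp [koebeFn, ha]
      rw [hfn]
      have := (hWd.clog hWslit).const_mul (1 / 2 : ℂ)
      refine this.congr_deriv (Eq.symm ?_)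
      rw [hkdef, hcdef, ha', hW]
      rw [show (0:ℝ) - 1 = -1 by norm_num, Real.rpow_neg_one]
      have hsne : (s : ℂ) ≠ 0 := by exact_mod_cast ne_of_gt hs0
      have hne' : (1 : ℂ) - (r : ℂ) ≠ 0 := hzdef ▸ hne
      rw [hzdef]
      push_cast
      field_simp
    · have hfn : koebeFn (a : ℂ)
          = fun w => (1 / (2 * (a:ℂ))) * (((1 + w) / (1 - w)) ^ (a:ℂ) - 1) := by
        funext w; simp [koebeFn, ha]
      rw [hfn]
      have hd1 : HasDerivAt (fun w : ℂ => ((1 + w) / (1 - w)) ^ (a:ℂ))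
          ((a:ℂ) * ((1 + z) / (1 - z)) ^ ((a:ℂ) - 1) * (2 / (1 - z) ^ 2)) z :=
        hWd.cpow_const hWslit
      have := (hd1.sub_const 1).const_mul (1 / (2 * (a:ℂ)))
      refine this.congr_deriv (Eq.symm ?_)
      rw [hkdef, hcdef, hW, hcast]
      have hne2 : ((1:ℂ) - z) ^ 2 ≠ 0 := pow_ne_zero 2 hne
      push_cast
      rw [hsq] at hne2 ⊢
      field_simp
  -- deriv h z - deriv g z = k'
  have hhd : DifferentiableAt ℂ h z := (hh z hzd).differentiableAt hzmem
  have hgd : DifferentiableAt ℂ g z := (hg z hzd).differentiableAt hzmem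
  have hkd' : HasDerivAt (fun w => h w - g w) k' z :=
    hkd.congr_of_eventuallyEq (Filter.eventuallyEq_of_mem hzmem hshear)
  have hsub : deriv h z - deriv g z = k' :=
    (hhd.hasDerivAt.sub hgd.hasDerivAt).unique hkd'
  -- lens map value
  set t : ℝ := s ^ R with htdef
  have ht1 : 1 ≤ t := Real.one_le_rpow hs1 hR0
  have ht0 : 0 < t := lt_of_lt_of_le one_pos ht1
  have hT : ((1 + z) / (1 - z)) ^ (R : ℂ) = ((t : ℝ) : ℂ) := by
    rw [hW, htdef, Complex.ofReal_cpow hs0.le]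
  have htp : ((t : ℝ) : ℂ) + 1 ≠ 0 := by
    exact_mod_cast ne_of_gt (by positivity : (0:ℝ) < t + 1)
  have hL : lensMap R z = (((t - 1) / (t + 1) : ℝ) : ℂ) := by
    rw [lensMap, hT]; push_cast; ring_nf
  -- solve for deriv h z
  have hgz : deriv g z = lensMap R z * deriv h z := hdil z hzd
  have heq : deriv h z * (1 - lensMap R z) = k' := by
    rw [← hsub, hgz]; ring
  have h1L : (1 : ℂ) - lensMap R z = 2 / (((t : ℝ) : ℂ) + 1) := by
    rw [hL]; push_cast; field_simp [htp]; ring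
  have hhz : deriv h z = ((c * (t + 1) / 2 : ℝ) : ℂ) := by
    rw [h1L, hkdef] at heq
    field_simp [htp] at heq
    push_cast
    linear_combination heq / 2
  have hgz' : deriv g z = ((c * (t - 1) / 2 : ℝ) : ℂ) := by
    rw [hgz, hL, hhz]
    push_cast
    field_simp [htp]
  -- take absolute values
  rw [hhz, hgz', Complex.norm_real, Complex.norm_real, Real.norm_eq_abs, Real.norm_eq_abs,
    _root_.abs_of_nonneg (by positivity : (0:ℝ) ≤ c * (t + 1) / 2),
    _root_.abs_of_nonneg (by nlinarith : (0:ℝ) ≤ c * (t - 1) / 2)]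
  have hsum : c * (t + 1) / 2 + c * (t - 1) / 2 = c * t := by ring
  rw [hsum, hcdef, htdef]
  have key : s ^ (a - 1) / (1 - r) ^ 2 * s ^ R = s ^ (a + R - 1) / (1 - r) ^ 2 := by
    rw [div_mul_eq_mul_div, ← Real.rpow_add hs0, show a - 1 + R = a + R - 1 from by ring]
  have key2 : s ^ (a + R - 1) = (1 + r) ^ (a + R - 1) / (1 - r) ^ (a + R - 1) := by
    rw [hsdef, Real.div_rpow h1r'.le h1r.le]
  have key3 : (1 - r) ^ (a + R - 1) * (1 - r) ^ 2 = (1 - r) ^ (a + R + 1) := by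
    rw [← Real.rpow_natCast (1 - r) 2, ← Real.rpow_add h1r]
    push_cast
    congr 1
    ring
  rw [key, key2, div_div, key3]
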